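/- In Strings and Coins on the complete bipartite graph K(2, b) with b ≥ 2, Player 1 wins when b is odd and Player 2 wins when b is even. -/

import Mathlib

/-- A position in Strings and Coins: a finite multigraph, with vertex set `verts`
and a multiset of (possibly loop) edges, each given as an ordered pair. -/
structure SCPos (V : Type) where
  verts : Finset V
  edges : Multiset (V × V)

variable {V : Type} [DecidableEq V]

/-- Number of edges incident to `v` (each edge, including a loop, counted once);
only being zero or nonzero matters for captures. -/
def SCPos.deg (p : SCPos V) (v : V) : ℕ :=
  (p.edges.filter (fun f => f.1 = v ∨ f.2 = v)).card

/-- Degree of `v`, where a loop at `v` contributes 2. -/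
def SCPos.degree (p : SCPos V) (v : V) : ℕ :=
  (p.edges.map (fun e => (if e.1 = v then 1 else 0) + (if e.2 = v then 1 else 0))).sum

/-- The position obtained by removing one copy of edge `e`. -/
def SCPos.remove (p : SCPos V) (e : V × V) : SCPos V :=
  ⟨p.verts, p.edges.erase e⟩

/-- The number of vertices captured by removing edge `e` from `p`:
endpoints of `e` whose degree drops to zero. -/
def SCPos.caps (p : SCPos V) (e : V × V) : ℕ :=
  (p.verts.filter (fun v => (v = e.1 ∨ v = e.2) ∧ (p.remove e).deg v = 0)).card

/-- Optimal score `(mover's points, opponent's points)` of Strings and Coins,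
under play where each player maximizes their own number of captured vertices.
A player who captures at least one vertex moves again. -/
noncomputable def SCPos.score (p : SCPos V) : ℕ × ℕ :=
  if h : p.edges = 0 then (0, 0)
  else
    (p.edges.toList.attach.map (fun ⟨e, he⟩ =>
      let s := (p.remove e).score
      let c := p.caps e
      if c = 0 then (s.2, s.1) else (s.1 + c, s.2))).foldl
      (fun best o => if best.1 ≤ o.1 then o else best) (0, 0)
termination_by p.edges.card
decreasing_by
  exact Multiset.card_erase_lt_of_mem (Multiset.mem_toList.mp he)

/-- The cycle graph `C_n` as a Strings and Coins position. -/
def cyclePos (n : ℕ) : SCPos ℕ :=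
  ⟨Finset.range n, ((List.range n).map (fun i => (i, (i + 1) % n)) : List (ℕ × ℕ))⟩

/-- The friendship graph `F_n`: `n` triangles sharing the common vertex `0`. -/
def friendshipPos (n : ℕ) : SCPos ℕ :=
  ⟨Finset.range (2 * n + 1),
   (((List.range n).flatMap fun i =>
      [(0, 2 * i + 1), (0, 2 * i + 2), (2 * i + 1, 2 * i + 2)]) : List (ℕ × ℕ))⟩

/-- The pinwheel graph `PW_n`: `n` copies of `C_4` sharing the common vertex `0`. -/
def pinwheelPos (n : ℕ) : SCPos ℕ :=
  ⟨Finset.range (3 * n + 1),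
   (((List.range n).flatMap fun i =>
      [(0, 3 * i + 1), (3 * i + 1, 3 * i + 2), (3 * i + 2, 3 * i + 3), (3 * i + 3, 0)]) :
     List (ℕ × ℕ))⟩

/-- The loopy star `L_n`: center `0`, outer vertices `1, …, n`, each joined to the
center by an edge and carrying one loop. -/
def loopyStarPos (n : ℕ) : SCPos ℕ :=
  ⟨Finset.range (n + 1),
   (((List.range n).flatMap fun i => [(0, i + 1), (i + 1, i + 1)]) : List (ℕ × ℕ))⟩

/-- The double loopy star `L(n,2)`: center `0`, outer vertices `1, …, n`, each joined
to the center by an edge and carrying two loops. -/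
def doubleLoopyStarPos (n : ℕ) : SCPos ℕ :=
  ⟨Finset.range (n + 1),
   (((List.range n).flatMap fun i => [(0, i + 1), (i + 1, i + 1), (i + 1, i + 1)]) :
     List (ℕ × ℕ))⟩

/-- The complete bipartite graph `K(1, b)` (a star with `b` leaves). -/
def starPos (b : ℕ) : SCPos ℕ :=
  ⟨Finset.range (b + 1), (((List.range b).map fun i => (0, i + 1)) : List (ℕ × ℕ))⟩

/-- The complete bipartite graph `K(2, b)`: part `{0, 1}` and part `{2, …, b+1}`. -/
def k2bPos (b : ℕ) : SCPos ℕ :=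
  ⟨Finset.range (b + 2),
   (((List.range b).flatMap fun j => [(0, j + 2), (1, j + 2)]) : List (ℕ × ℕ))⟩

/-- The balloon path `BP_n`: a path on vertices `0, …, n-1` with one loop at each vertex. -/
def balloonPathPos (n : ℕ) : SCPos ℕ :=
  ⟨Finset.range n,
   ((((List.range (n - 1)).map fun i => (i, i + 1)) ++
     ((List.range n).map fun i => (i, i))) : List (ℕ × ℕ))⟩

/-- The loopy cycle `C_(n,1)`: the cycle `C_n` with one extra loop at vertex `0`. -/
def loopyCyclePos (n : ℕ) : SCPos ℕ :=
  ⟨Finset.range n, (0, 0) ::ₘ (cyclePos n).edges⟩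

/-- The Strings and Coins position of a finite simple graph: all vertices,
and one (arbitrarily oriented) edge for each edge of the graph. -/
noncomputable def posOfGraph {W : Type} [Fintype W] [DecidableEq W]
    (G : SimpleGraph W) [DecidableRel G.Adj] : SCPos W :=
  ⟨Finset.univ, G.edgeFinset.val.map Quot.out⟩


namespace SCAux

open Multiset

def sel (best o : ℕ × ℕ) : ℕ × ℕ := if best.1 ≤ o.1 then o else best

lemma foldl_sel_mem : ∀ (l : List (ℕ × ℕ)) (b : ℕ × ℕ),
    l.foldl sel b ∈ l ∨ l.foldl sel b = b := by
  intro l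
  induction l with
  | nil => intro b; simp
  | cons a t ih =>
    intro b
    rw [List.foldl_cons]
    rcases ih (sel b a) with h | h
    · exact Or.inl (List.mem_cons_of_mem _ h)
    · rw [h]
      unfold sel
      split
      · exact Or.inl List.mem_cons_self
      · exact Or.inr rfl

lemma le_foldl_init : ∀ (l : List (ℕ × ℕ)) (b : ℕ × ℕ), b.1 ≤ (l.foldl sel b).1 := by
  intro l
  induction l with
  | nil => intro b; simp
  | cons a t ih =>
    intro b
    rw [List.foldl_cons]
    refine le_trans ?_ (ih (sel b a))
    unfold sel; split <;> omega

lemma le_foldl : ∀ (l : List (ℕ × ℕ)) (b : ℕ × ℕ), ∀ o ∈ l, o.1 ≤ (l.foldl sel b).1 := by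
  intro l
  induction l with
  | nil => simp
  | cons a t ih =>
    intro b o ho
    rw [List.foldl_cons]
    rcases List.mem_cons.mp ho with rfl | h
    · refine le_trans ?_ (le_foldl_init t (sel b o))
      unfold sel; split <;> omega
    · exact ih _ o h

lemma foldl_sel_zero_mem (l : List (ℕ × ℕ)) (hl : l ≠ []) : l.foldl sel (0, 0) ∈ l := by
  cases l with
  | nil => exact absurd rfl hl
  | cons a t =>
    rw [List.foldl_cons]
    have h : sel (0, 0) a = a := by unfold sel; simp
    rw [h]
    rcases foldl_sel_mem t a with h' | h'
    · exact List.mem_cons_of_mem _ h'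
    · rw [h']; exact List.mem_cons_self

variable {V : Type} [DecidableEq V]

lemma score_eq (p : SCPos V) (h : ¬ p.edges = 0) :
    p.score = (p.edges.toList.attach.map (fun x =>
      let s := (p.remove x.1).score
      let c := p.caps x.1
      if c = 0 then (s.2, s.1) else (s.1 + c, s.2))).foldl sel (0, 0) := by
  rw [SCPos.score, dif_neg h]
  rfl

/-- The value of the move `e` in position `p`. -/
noncomputable def mval (p : SCPos V) (e : V × V) : ℕ :=
  if p.caps e = 0 then ((p.remove e).score).2 else ((p.remove e).score).1 + p.caps e

lemma score_spec (p : SCPos V) (h : ¬ p.edges = 0) :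
    (∃ e ∈ p.edges, p.score =
        (if p.caps e = 0 then (((p.remove e).score).2, ((p.remove e).score).1)
         else (((p.remove e).score).1 + p.caps e, ((p.remove e).score).2))) ∧
    ∀ e ∈ p.edges, mval p e ≤ p.score.1 := by
  have hnil : p.edges.toList ≠ [] := fun hh => h (Multiset.toList_eq_nil.mp hh)
  constructor
  · have hmem := foldl_sel_zero_mem (p.edges.toList.attach.map (fun x =>
      let s := (p.remove x.1).score
      let c := p.caps x.1
      if c = 0 then (s.2, s.1) else (s.1 + c, s.2)))
      (by simpa using hnil)
    rw [List.mem_map] at hmem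
    obtain ⟨x, _, hx⟩ := hmem
    refine ⟨x.1, Multiset.mem_toList.mp x.2, ?_⟩
    rw [score_eq p h, ← hx]
  · intro e he
    have hx : (⟨e, Multiset.mem_toList.mpr he⟩ : {x // x ∈ p.edges.toList}) ∈
        p.edges.toList.attach := List.mem_attach _ _
    have hmem : (let s := (p.remove e).score
      let c := p.caps e
      if c = 0 then (s.2, s.1) else (s.1 + c, s.2)) ∈ (p.edges.toList.attach.map (fun x =>
      let s := (p.remove x.1).score
      let c := p.caps x.1
      if c = 0 then (s.2, s.1) else (s.1 + c, s.2))) := List.mem_map_of_mem hx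
    have hle := le_foldl _ (0, 0) _ hmem
    rw [score_eq p h]
    refine le_trans (le_of_eq ?_) hle
    unfold mval
    by_cases hc : p.caps e = 0 <;> simp [hc]



lemma deg_remove_of_endpoint (p : SCPos V) {e : V × V} (he : e ∈ p.edges) {v : V}
    (hv : v = e.1 ∨ v = e.2) : p.deg v = (p.remove e).deg v + 1 := by
  obtain ⟨t, ht⟩ := Multiset.exists_cons_of_mem he
  have hq : e.1 = v ∨ e.2 = v := by tauto
  unfold SCPos.deg SCPos.remove
  rw [ht, Multiset.erase_cons_head,
    Multiset.filter_cons_of_pos (p := fun f => f.1 = v ∨ f.2 = v) t hq, Multiset.card_cons]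

lemma deg_remove_of_not (p : SCPos V) {e : V × V} {v : V}
    (hv : ¬(v = e.1 ∨ v = e.2)) : (p.remove e).deg v = p.deg v := by
  unfold SCPos.deg SCPos.remove
  by_cases he : e ∈ p.edges
  · obtain ⟨t, ht⟩ := Multiset.exists_cons_of_mem he
    have hq : ¬(e.1 = v ∨ e.2 = v) := by tauto
    rw [ht, Multiset.erase_cons_head,
      Multiset.filter_cons_of_neg (p := fun f => f.1 = v ∨ f.2 = v) t hq]
  · rw [Multiset.erase_of_notMem he]

/-- Number of live (positive-degree) vertices. -/
def lc (p : SCPos V) : ℕ := (p.verts.filter (fun v => p.deg v ≠ 0)).card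

lemma lc_remove (p : SCPos V) {e : V × V} (he : e ∈ p.edges) :
    lc p = lc (p.remove e) + p.caps e := by
  unfold lc SCPos.caps
  have hverts : (p.remove e).verts = p.verts := rfl
  rw [hverts, Finset.card_filter, Finset.card_filter, Finset.card_filter,
    ← Finset.sum_add_distrib]
  apply Finset.sum_congr rfl
  intro v _
  by_cases hend : v = e.1 ∨ v = e.2
  · have h1 := deg_remove_of_endpoint p he hend
    by_cases h0 : (p.remove e).deg v = 0 <;> simp [hend, h0, h1]
  · have h1 := deg_remove_of_not p (e := e) hend
    simp [hend, h1]

lemma card_remove (p : SCPos V) {e : V × V} (he : e ∈ p.edges) :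
    Multiset.card (p.remove e).edges < Multiset.card p.edges := by
  exact Multiset.card_erase_lt_of_mem he

lemma score_add_aux : ∀ n : ℕ, ∀ p : SCPos V, Multiset.card p.edges = n →
    p.score.1 + p.score.2 = lc p := by
  intro n
  induction n using Nat.strong_induction_on with
  | _ n ih =>
    intro p hc
    by_cases h : p.edges = 0
    · rw [SCPos.score, dif_pos h]
      simp [lc, SCPos.deg, h]
    · obtain ⟨⟨e, he, hsc⟩, _⟩ := score_spec p h
      have hrem := lc_remove p he
      have hlt : Multiset.card (p.remove e).edges < n := hc ▸ card_remove p he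
      have IH := ih _ hlt (p.remove e) rfl
      by_cases hcaps : p.caps e = 0 <;> rw [hsc] <;> simp [hcaps] <;> omega

lemma score_add (p : SCPos V) : p.score.1 + p.score.2 = lc p :=
  score_add_aux _ p rfl




/-- Edge multiset: intact middle vertices `M` (joined to both 0 and 1),
half vertices `A` joined to 0 only, `C` joined to 1 only. -/
def EOf (M A C : Finset ℕ) : Multiset (ℕ × ℕ) :=
  M.val.map (fun x => ((0 : ℕ), x)) + M.val.map (fun x => ((1 : ℕ), x)) +
  A.val.map (fun x => ((0 : ℕ), x)) + C.val.map (fun x => ((1 : ℕ), x))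

def pos (n : ℕ) (M A C : Finset ℕ) : SCPos ℕ := ⟨Finset.range n, EOf M A C⟩

structure OK (n : ℕ) (M A C : Finset ℕ) : Prop where
  hM : ∀ x ∈ M, 2 ≤ x ∧ x < n
  hA : ∀ x ∈ A, 2 ≤ x ∧ x < n
  hC : ∀ x ∈ C, 2 ≤ x ∧ x < n
  dMA : Disjoint M A
  dMC : Disjoint M C
  dAC : Disjoint A C

lemma card_EOf (M A C : Finset ℕ) :
    Multiset.card (EOf M A C) = 2 * M.card + A.card + C.card := by
  simp [EOf]; ring

lemma deg_pos (n : ℕ) (M A C : Finset ℕ) (v : ℕ) :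
    (pos n M A C).deg v =
      (M.filter (fun x => (0 : ℕ) = v ∨ x = v)).card +
      (M.filter (fun x => (1 : ℕ) = v ∨ x = v)).card +
      (A.filter (fun x => (0 : ℕ) = v ∨ x = v)).card +
      (C.filter (fun x => (1 : ℕ) = v ∨ x = v)).card := by
  unfold SCPos.deg pos EOf
  simp only [Multiset.filter_add, Multiset.card_add, Multiset.filter_map, Multiset.card_map]
  rfl

lemma deg_pos_zero (h : OK n M A C) : (pos n M A C).deg 0 = M.card + A.card := by
  rw [deg_pos]
  have h1 : ∀ (S : Finset ℕ), (∀ x ∈ S, 2 ≤ x ∧ x < n) →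
      (S.filter (fun x => (0 : ℕ) = 0 ∨ x = 0)).card = S.card := by
    intro S hS
    rw [Finset.filter_true_of_mem (fun x _ => Or.inl rfl)]
  have h2 : ∀ (S : Finset ℕ), (∀ x ∈ S, 2 ≤ x ∧ x < n) →
      (S.filter (fun x => (1 : ℕ) = 0 ∨ x = 0)).card = 0 := by
    intro S hS
    rw [Finset.filter_false_of_mem, Finset.card_empty]
    intro x hx
    have := hS x hx
    omega
  rw [h1 M h.hM, h2 M h.hM, h1 A h.hA, h2 C h.hC]
  omega

lemma deg_pos_one (h : OK n M A C) : (pos n M A C).deg 1 = M.card + C.card := by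
  rw [deg_pos]
  have h1 : ∀ (S : Finset ℕ), (∀ x ∈ S, 2 ≤ x ∧ x < n) →
      (S.filter (fun x => (1 : ℕ) = 1 ∨ x = 1)).card = S.card := by
    intro S hS
    rw [Finset.filter_true_of_mem (fun x _ => Or.inl rfl)]
  have h2 : ∀ (S : Finset ℕ), (∀ x ∈ S, 2 ≤ x ∧ x < n) →
      (S.filter (fun x => (0 : ℕ) = 1 ∨ x = 1)).card = 0 := by
    intro S hS
    rw [Finset.filter_false_of_mem, Finset.card_empty]
    intro x hx
    have := hS x hx
    omega
  rw [h1 M h.hM, h2 M h.hM, h2 A h.hA, h1 C h.hC]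
  omega

lemma deg_pos_mid (M A C : Finset ℕ) {v : ℕ} (hv : 2 ≤ v) :
    (pos n M A C).deg v =
      2 * (if v ∈ M then 1 else 0) + (if v ∈ A then 1 else 0) + (if v ∈ C then 1 else 0) := by
  rw [deg_pos]
  have h1 : ∀ (S : Finset ℕ) (u : ℕ), u < 2 →
      (S.filter (fun x => u = v ∨ x = v)).card = (if v ∈ S then 1 else 0) := by
    intro S u hu
    have : (S.filter (fun x => u = v ∨ x = v)) = S.filter (fun x => x = v) := by
      apply Finset.filter_congr
      intro x _
      constructor
      · rintro (h | h)
        · omega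
        · exact h
      · exact Or.inr
    rw [this, Finset.filter_eq']
    by_cases hm : v ∈ S <;> simp [hm]
  rw [h1 M 0 (by omega), h1 M 1 (by omega), h1 A 0 (by omega), h1 C 1 (by omega)]
  ring


set_option maxHeartbeats 1000000 in
lemma lc_pos_eq (h : OK n M A C) (hn : 2 ≤ n) :
    lc (pos n M A C) = M.card + A.card + C.card
      + (if M.card + A.card = 0 then 0 else 1)
      + (if M.card + C.card = 0 then 0 else 1) := by
  unfold lc
  have hset : ((pos n M A C).verts.filter (fun v => (pos n M A C).deg v ≠ 0)) =
      ((M ∪ A ∪ C) ∪ ((if M.card + A.card = 0 then (∅ : Finset ℕ) else {0}) ∪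
        (if M.card + C.card = 0 then (∅ : Finset ℕ) else {1}))) := by
    have hverts : (pos n M A C).verts = Finset.range n := rfl
    rw [hverts]
    ext v
    simp only [Finset.mem_filter, Finset.mem_range, Finset.mem_union]
    by_cases h0 : v = 0
    · subst h0
      rw [deg_pos_zero h]
      have hm1 : (0 : ℕ) ∉ M := fun hh => by have := h.hM 0 hh; omega
      have hm2 : (0 : ℕ) ∉ A := fun hh => by have := h.hA 0 hh; omega
      have hm3 : (0 : ℕ) ∉ C := fun hh => by have := h.hC 0 hh; omega
      by_cases hMA : M.card + A.card = 0 <;> by_cases hMC : M.card + C.card = 0 <;>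
        simp only [hMA, hMC, if_true, if_false] <;> simp [hMA, hMC, hm1, hm2, hm3, -Finset.card_eq_zero] <;> omega
    · by_cases h1 : v = 1
      · subst h1
        rw [deg_pos_one h]
        have hm1 : (1 : ℕ) ∉ M := fun hh => by have := h.hM 1 hh; omega
        have hm2 : (1 : ℕ) ∉ A := fun hh => by have := h.hA 1 hh; omega
        have hm3 : (1 : ℕ) ∉ C := fun hh => by have := h.hC 1 hh; omega
        by_cases hMA : M.card + A.card = 0 <;> by_cases hMC : M.card + C.card = 0 <;>
          simp only [hMA, hMC, if_true, if_false] <;> simp [hMA, hMC, hm1, hm2, hm3, -Finset.card_eq_zero] <;> omega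
      · have hv2 : 2 ≤ v := by omega
        rw [deg_pos_mid M A C hv2]
        have hmem0 : (v ∈ (if M.card + A.card = 0 then (∅ : Finset ℕ) else {0})) = False := by
          split <;> simp [h0]
        have hmem1 : (v ∈ (if M.card + C.card = 0 then (∅ : Finset ℕ) else {1})) = False := by
          split <;> simp [h1]
        have hin : v ∈ M ∨ v ∈ A ∨ v ∈ C → v < n := by
          rintro (hh | hh | hh)
          exacts [(h.hM v hh).2, (h.hA v hh).2, (h.hC v hh).2]
        simp only [hmem0, hmem1, or_false, false_or, or_self]
        constructor
        · rintro ⟨hvn, hdeg⟩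
          by_cases hM : v ∈ M
          · exact Or.inl (Or.inl hM)
          · by_cases hA : v ∈ A
            · exact Or.inl (Or.inr hA)
            · by_cases hC : v ∈ C
              · exact Or.inr hC
              · exfalso
                apply hdeg
                simp [hM, hA, hC]
        · intro hv
          refine ⟨hin (by tauto), ?_⟩
          by_cases hM : v ∈ M <;> by_cases hA : v ∈ A <;> by_cases hC : v ∈ C <;>
            simp [hM, hA, hC] at hv ⊢
  rw [hset]
  have hd : Disjoint (M ∪ A ∪ C) ((if M.card + A.card = 0 then (∅ : Finset ℕ) else {0}) ∪
        (if M.card + C.card = 0 then (∅ : Finset ℕ) else {1})) := by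
    rw [Finset.disjoint_left]
    intro x hx hx'
    have hx2 : 2 ≤ x := by
      rcases Finset.mem_union.mp hx with hh | hh
      · rcases Finset.mem_union.mp hh with hh' | hh'
        · exact (h.hM x hh').1
        · exact (h.hA x hh').1
      · exact (h.hC x hh).1
    rcases Finset.mem_union.mp hx' with hh | hh <;> revert hh <;> split <;> simp <;> omega
  rw [Finset.card_union_of_disjoint hd]
  have e1 : (M ∪ A ∪ C).card = M.card + A.card + C.card := by
    rw [Finset.card_union_of_disjoint (Finset.disjoint_union_left.mpr ⟨h.dMC, h.dAC⟩),
      Finset.card_union_of_disjoint h.dMA]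
  have e2 : ((if M.card + A.card = 0 then (∅ : Finset ℕ) else {0}) ∪
      (if M.card + C.card = 0 then (∅ : Finset ℕ) else {1})).card =
      (if M.card + A.card = 0 then 0 else 1) + (if M.card + C.card = 0 then 0 else 1) := by
    rw [Finset.card_union_of_disjoint]
    · split <;> split <;> simp
    · split <;> split <;> simp
  rw [e1, e2]
  omega


lemma inj0 : Function.Injective (fun x : ℕ => ((0 : ℕ), x)) := fun a b h => by
  simpa using h

lemma inj1 : Function.Injective (fun x : ℕ => ((1 : ℕ), x)) := fun a b h => by
  simpa using h

lemma mem_EOf {M A C : Finset ℕ} {e : ℕ × ℕ} : e ∈ EOf M A C ↔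
    (∃ x ∈ M, e = (0, x)) ∨ (∃ x ∈ M, e = (1, x)) ∨
    (∃ x ∈ A, e = (0, x)) ∨ (∃ x ∈ C, e = (1, x)) := by
  simp only [EOf, Multiset.mem_add, Multiset.mem_map, Finset.mem_val]
  constructor
  · rintro (((⟨x, hx, rfl⟩ | ⟨x, hx, rfl⟩) | ⟨x, hx, rfl⟩) | ⟨x, hx, rfl⟩)
    · exact Or.inl ⟨x, hx, rfl⟩
    · exact Or.inr (Or.inl ⟨x, hx, rfl⟩)
    · exact Or.inr (Or.inr (Or.inl ⟨x, hx, rfl⟩))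
    · exact Or.inr (Or.inr (Or.inr ⟨x, hx, rfl⟩))
  · rintro (⟨x, hx, rfl⟩ | ⟨x, hx, rfl⟩ | ⟨x, hx, rfl⟩ | ⟨x, hx, rfl⟩)
    · exact Or.inl (Or.inl (Or.inl ⟨x, hx, rfl⟩))
    · exact Or.inl (Or.inl (Or.inr ⟨x, hx, rfl⟩))
    · exact Or.inl (Or.inr ⟨x, hx, rfl⟩)
    · exact Or.inr ⟨x, hx, rfl⟩

lemma not_mem_map0 {S : Finset ℕ} {x : ℕ} (hx : x ∉ S) :
    ((0 : ℕ), x) ∉ S.val.map (fun y => ((0 : ℕ), y)) := by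
  intro hmem
  obtain ⟨y, hy, hxy⟩ := Multiset.mem_map.mp hmem
  obtain rfl : y = x := by simpa using hxy
  exact hx (Finset.mem_val.mp hy)

lemma not_mem_map01 {S : Finset ℕ} {x : ℕ} :
    ((0 : ℕ), x) ∉ S.val.map (fun y => ((1 : ℕ), y)) := by
  simp only [Multiset.mem_map, Finset.mem_val, not_exists]
  rintro y ⟨hy, hxy⟩
  simp at hxy

lemma not_mem_map10 {S : Finset ℕ} {x : ℕ} :
    ((1 : ℕ), x) ∉ S.val.map (fun y => ((0 : ℕ), y)) := by
  simp only [Multiset.mem_map, Finset.mem_val, not_exists]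
  rintro y ⟨hy, hxy⟩
  simp at hxy

lemma not_mem_map1 {S : Finset ℕ} {x : ℕ} (hx : x ∉ S) :
    ((1 : ℕ), x) ∉ S.val.map (fun y => ((1 : ℕ), y)) := by
  intro hmem
  obtain ⟨y, hy, hxy⟩ := Multiset.mem_map.mp hmem
  obtain rfl : y = x := by simpa using hxy
  exact hx (Finset.mem_val.mp hy)

lemma mem_map0 {S : Finset ℕ} {x : ℕ} (hx : x ∈ S) :
    ((0 : ℕ), x) ∈ S.val.map (fun y => ((0 : ℕ), y)) :=
  Multiset.mem_map.mpr ⟨x, Finset.mem_val.mpr hx, rfl⟩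

lemma mem_map1 {S : Finset ℕ} {x : ℕ} (hx : x ∈ S) :
    ((1 : ℕ), x) ∈ S.val.map (fun y => ((1 : ℕ), y)) :=
  Multiset.mem_map.mpr ⟨x, Finset.mem_val.mpr hx, rfl⟩

lemma erase_map0 (S : Finset ℕ) (x : ℕ) :
    (S.val.map (fun y => ((0 : ℕ), y))).erase (0, x) = (S.erase x).val.map (fun y => ((0 : ℕ), y)) := by
  rw [Finset.erase_val, Multiset.map_erase _ inj0]

lemma erase_map1 (S : Finset ℕ) (x : ℕ) :
    (S.val.map (fun y => ((1 : ℕ), y))).erase (1, x) = (S.erase x).val.map (fun y => ((1 : ℕ), y)) := by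
  rw [Finset.erase_val, Multiset.map_erase _ inj1]

/-- Removing the `A`-edge `(0,x)`. -/
lemma remove_A {n : ℕ} {M A C : Finset ℕ} {x : ℕ} (hx : x ∈ A) (hxM : x ∉ M) :
    (pos n M A C).remove (0, x) = pos n M (A.erase x) C := by
  unfold SCPos.remove pos
  congr 1
  show (EOf M A C).erase (0, x) = EOf M (A.erase x) C
  unfold EOf
  rw [Multiset.erase_add_left_pos _ (by
    exact Multiset.mem_add.mpr (Or.inr (mem_map0 hx)))]
  rw [Multiset.erase_add_right_pos _ (mem_map0 hx), erase_map0]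

/-- Removing the `C`-edge `(1,x)`. -/
lemma remove_C {n : ℕ} {M A C : Finset ℕ} {x : ℕ} (hx : x ∈ C) (hxM : x ∉ M) :
    (pos n M A C).remove (1, x) = pos n M A (C.erase x) := by
  unfold SCPos.remove pos
  congr 1
  show (EOf M A C).erase (1, x) = EOf M A (C.erase x)
  unfold EOf
  rw [Multiset.erase_add_right_pos _ (mem_map1 hx), erase_map1]

lemma cons_map0 {S : Finset ℕ} {x : ℕ} (hx : x ∈ S) :
    S.val.map (fun y => ((0 : ℕ), y)) = (0, x) ::ₘ (S.erase x).val.map (fun y => ((0 : ℕ), y)) := by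
  rw [Finset.erase_val, ← Multiset.map_cons, Multiset.cons_erase (Finset.mem_val.mpr hx)]

lemma cons_map1 {S : Finset ℕ} {x : ℕ} (hx : x ∈ S) :
    S.val.map (fun y => ((1 : ℕ), y)) = (1, x) ::ₘ (S.erase x).val.map (fun y => ((1 : ℕ), y)) := by
  rw [Finset.erase_val, ← Multiset.map_cons, Multiset.cons_erase (Finset.mem_val.mpr hx)]

/-- Removing the edge `(0,x)` of an intact middle vertex `x ∈ M`. -/
lemma remove_M0 {n : ℕ} {M A C : Finset ℕ} {x : ℕ} (hx : x ∈ M) (hxA : x ∉ A) (hxC : x ∉ C) :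
    (pos n M A C).remove (0, x) = pos n (M.erase x) A (insert x C) := by
  unfold SCPos.remove pos
  congr 1
  show (EOf M A C).erase (0, x) = EOf (M.erase x) A (insert x C)
  unfold EOf
  rw [Multiset.erase_add_left_pos _ (by
      exact Multiset.mem_add.mpr (Or.inl (Multiset.mem_add.mpr (Or.inl (mem_map0 hx)))))]
  rw [Multiset.erase_add_left_pos _ (by
      exact Multiset.mem_add.mpr (Or.inl (mem_map0 hx)))]
  rw [Multiset.erase_add_left_pos _ (mem_map0 hx), erase_map0]
  rw [Finset.insert_val_of_notMem hxC, Multiset.map_cons]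
  rw [cons_map1 hx]
  simp only [← Multiset.singleton_add]
  abel

/-- Removing the edge `(1,x)` of an intact middle vertex `x ∈ M`. -/
lemma remove_M1 {n : ℕ} {M A C : Finset ℕ} {x : ℕ} (hx : x ∈ M) (hxA : x ∉ A) (hxC : x ∉ C) :
    (pos n M A C).remove (1, x) = pos n (M.erase x) (insert x A) C := by
  unfold SCPos.remove pos
  congr 1
  show (EOf M A C).erase (1, x) = EOf (M.erase x) (insert x A) C
  unfold EOf
  rw [Multiset.erase_add_left_pos _ (by
      exact Multiset.mem_add.mpr (Or.inl (Multiset.mem_add.mpr (Or.inr (mem_map1 hx)))))]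
  rw [Multiset.erase_add_left_pos _ (by
      exact Multiset.mem_add.mpr (Or.inr (mem_map1 hx)))]
  rw [Multiset.erase_add_right_pos _ (mem_map1 hx), erase_map1]
  rw [Finset.insert_val_of_notMem hxA, Multiset.map_cons]
  rw [cons_map0 hx]
  simp only [← Multiset.singleton_add]
  abel


/-- The deficit of the first player's score from the number of live vertices,
as a function of the number of intact middle vertices. -/
def g (m : ℕ) : ℕ := if m = 0 then 0 else if m % 2 = 1 then (m - 1) / 2 else m / 2 + 3

lemma g_rel : ∀ m : ℕ, 1 ≤ m →
    (2 ≤ m ∧ g (m - 1) + g m = m + 2) ∨ (m = 1 ∧ g (m - 1) = 0 ∧ g m = 0) := by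
  intro m hm
  unfold g
  split_ifs <;> omega

lemma OK_erase_A (h : OK n M A C) (x : ℕ) : OK n M (A.erase x) C :=
  ⟨h.hM, fun y hy => h.hA y (Finset.mem_of_mem_erase hy), h.hC,
    h.dMA.mono_right (Finset.erase_subset _ _), h.dMC,
    h.dAC.mono_left (Finset.erase_subset _ _)⟩

lemma OK_erase_C (h : OK n M A C) (x : ℕ) : OK n M A (C.erase x) :=
  ⟨h.hM, h.hA, fun y hy => h.hC y (Finset.mem_of_mem_erase hy),
    h.dMA, h.dMC.mono_right (Finset.erase_subset _ _),
    h.dAC.mono_right (Finset.erase_subset _ _)⟩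

lemma OK_M0 (h : OK n M A C) {x : ℕ} (hx : x ∈ M) : OK n (M.erase x) A (insert x C) := by
  refine ⟨fun y hy => h.hM y (Finset.mem_of_mem_erase hy), h.hA, ?_, 
    h.dMA.mono_left (Finset.erase_subset _ _), ?_, ?_⟩
  · intro y hy
    rcases Finset.mem_insert.mp hy with rfl | hy'
    · exact h.hM y hx
    · exact h.hC y hy'
  · rw [Finset.disjoint_left]
    intro y hy hy'
    rcases Finset.mem_insert.mp hy' with rfl | hy''
    · exact absurd rfl (Finset.ne_of_mem_erase hy)
    · exact Finset.disjoint_left.mp h.dMC (Finset.mem_of_mem_erase hy) hy''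
  · rw [Finset.disjoint_left]
    intro y hy hy'
    rcases Finset.mem_insert.mp hy' with rfl | hy''
    · exact Finset.disjoint_left.mp h.dMA hx hy
    · exact Finset.disjoint_left.mp h.dAC hy hy''

lemma OK_M1 (h : OK n M A C) {x : ℕ} (hx : x ∈ M) : OK n (M.erase x) (insert x A) C := by
  refine ⟨fun y hy => h.hM y (Finset.mem_of_mem_erase hy), ?_, h.hC, ?_,
    h.dMC.mono_left (Finset.erase_subset _ _), ?_⟩
  · intro y hy
    rcases Finset.mem_insert.mp hy with rfl | hy'
    · exact h.hM y hx
    · exact h.hA y hy'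
  · rw [Finset.disjoint_left]
    intro y hy hy'
    rcases Finset.mem_insert.mp hy' with rfl | hy''
    · exact absurd rfl (Finset.ne_of_mem_erase hy)
    · exact Finset.disjoint_left.mp h.dMA (Finset.mem_of_mem_erase hy) hy''
  · rw [Finset.disjoint_left]
    intro y hy hy'
    rcases Finset.mem_insert.mp hy with rfl | hy''
    · exact Finset.disjoint_left.mp h.dMC hx hy'
    · exact Finset.disjoint_left.mp h.dAC hy'' hy'

lemma main_lemma : ∀ t n M A C, 2 * M.card + A.card + C.card = t → OK n M A C → 2 ≤ n →
    (pos n M A C).score.1 + g M.card = lc (pos n M A C) := by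
  intro t
  induction t using Nat.strong_induction_on with
  | _ t ih =>
  intro n M A C ht hOK hn
  by_cases hz : M = ∅ ∧ A = ∅ ∧ C = ∅
  · obtain ⟨rfl, rfl, rfl⟩ := hz
    have h0 : (pos n (∅ : Finset ℕ) ∅ ∅).edges = 0 := by simp [pos, EOf]
    rw [SCPos.score, dif_pos h0, lc_pos_eq hOK hn]
    simp [g]
  · have hne : ¬ (pos n M A C).edges = 0 := by
      intro hh
      have hcc := card_EOf M A C
      rw [show EOf M A C = (pos n M A C).edges from rfl, hh] at hcc
      simp only [Multiset.card_zero] at hcc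
      refine hz ⟨Finset.card_eq_zero.mp (by omega), Finset.card_eq_zero.mp (by omega),
        Finset.card_eq_zero.mp (by omega)⟩
    have hub2 : ∀ e ∈ (pos n M A C).edges,
        mval (pos n M A C) e + g M.card ≤ lc (pos n M A C) := by
      intro e he
      have hlcp := lc_pos_eq hOK hn
      rcases mem_EOf.mp he with ⟨x, hx, rfl⟩ | ⟨x, hx, rfl⟩ | ⟨x, hx, rfl⟩ | ⟨x, hx, rfl⟩
      · -- split move (0, x), x ∈ M
        have hxA : x ∉ A := Finset.disjoint_left.mp hOK.dMA hx
        have hxC : x ∉ C := Finset.disjoint_left.mp hOK.dMC hx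
        have hrm := remove_M0 (n := n) hx hxA hxC
        have hOK' := OK_M0 hOK hx
        have hMc : 1 ≤ M.card := Finset.card_pos.mpr ⟨x, hx⟩
        have hec : (M.erase x).card = M.card - 1 := Finset.card_erase_of_mem hx
        have hic : (insert x C).card = C.card + 1 := Finset.card_insert_of_notMem hxC
        have IH := ih (2 * (M.erase x).card + A.card + (insert x C).card)
          (by rw [hec, hic]; omega) n (M.erase x) A (insert x C) rfl hOK' hn
        have hsum := score_add (pos n (M.erase x) A (insert x C))
        have hlcc := lc_pos_eq hOK' hn
        have hrem := lc_remove (pos n M A C) he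
        rw [hrm] at hrem
        rw [hec] at IH
        rw [hec, hic] at hlcc
        have hg := g_rel M.card hMc
        unfold mval
        rw [hrm]
        by_cases hcaps : (pos n M A C).caps (0, x) = 0
        · rw [if_pos hcaps]
          split_ifs at hlcp hlcc <;> first | omega | (exfalso; assumption)
        · rw [if_neg hcaps]
          split_ifs at hlcp hlcc <;> first | omega | (exfalso; assumption)
      · -- split move (1, x), x ∈ M
        have hxA : x ∉ A := Finset.disjoint_left.mp hOK.dMA hx
        have hxC : x ∉ C := Finset.disjoint_left.mp hOK.dMC hx
        have hrm := remove_M1 (n := n) hx hxA hxC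
        have hOK' := OK_M1 hOK hx
        have hMc : 1 ≤ M.card := Finset.card_pos.mpr ⟨x, hx⟩
        have hec : (M.erase x).card = M.card - 1 := Finset.card_erase_of_mem hx
        have hic : (insert x A).card = A.card + 1 := Finset.card_insert_of_notMem hxA
        have IH := ih (2 * (M.erase x).card + (insert x A).card + C.card)
          (by rw [hec, hic]; omega) n (M.erase x) (insert x A) C rfl hOK' hn
        have hsum := score_add (pos n (M.erase x) (insert x A) C)
        have hlcc := lc_pos_eq hOK' hn
        have hrem := lc_remove (pos n M A C) he
        rw [hrm] at hrem
        rw [hec] at IH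
        rw [hec, hic] at hlcc
        have hg := g_rel M.card hMc
        unfold mval
        rw [hrm]
        by_cases hcaps : (pos n M A C).caps (1, x) = 0
        · rw [if_pos hcaps]
          split_ifs at hlcp hlcc <;> first | omega | (exfalso; assumption)
        · rw [if_neg hcaps]
          split_ifs at hlcp hlcc <;> first | omega | (exfalso; assumption)
      · -- take move (0, x), x ∈ A
        have hxM : x ∉ M := Finset.disjoint_right.mp hOK.dMA hx
        have hrm := remove_A (n := n) (M := M) (C := C) hx hxM
        have hOK' := OK_erase_A hOK x
        have hAc : 1 ≤ A.card := Finset.card_pos.mpr ⟨x, hx⟩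
        have hec : (A.erase x).card = A.card - 1 := Finset.card_erase_of_mem hx
        have IH := ih (2 * M.card + (A.erase x).card + C.card)
          (by rw [hec]; omega) n M (A.erase x) C rfl hOK' hn
        have hsum := score_add (pos n M (A.erase x) C)
        have hlcc := lc_pos_eq hOK' hn
        have hrem := lc_remove (pos n M A C) he
        rw [hrm] at hrem
        rw [hec] at hlcc
        unfold mval
        rw [hrm]
        by_cases hcaps : (pos n M A C).caps (0, x) = 0
        · rw [if_pos hcaps]
          split_ifs at hlcp hlcc <;> first | omega | (exfalso; assumption)
        · rw [if_neg hcaps]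
          split_ifs at hlcp hlcc <;> first | omega | (exfalso; assumption)
      · -- take move (1, x), x ∈ C
        have hxM : x ∉ M := Finset.disjoint_right.mp hOK.dMC hx
        have hrm := remove_C (n := n) (M := M) (A := A) hx hxM
        have hOK' := OK_erase_C hOK x
        have hCc : 1 ≤ C.card := Finset.card_pos.mpr ⟨x, hx⟩
        have hec : (C.erase x).card = C.card - 1 := Finset.card_erase_of_mem hx
        have IH := ih (2 * M.card + A.card + (C.erase x).card)
          (by rw [hec]; omega) n M A (C.erase x) rfl hOK' hn
        have hsum := score_add (pos n M A (C.erase x))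
        have hlcc := lc_pos_eq hOK' hn
        have hrem := lc_remove (pos n M A C) he
        rw [hrm] at hrem
        rw [hec] at hlcc
        unfold mval
        rw [hrm]
        by_cases hcaps : (pos n M A C).caps (1, x) = 0
        · rw [if_pos hcaps]
          split_ifs at hlcp hlcc <;> first | omega | (exfalso; assumption)
        · rw [if_neg hcaps]
          split_ifs at hlcp hlcc <;> first | omega | (exfalso; assumption)
    have hex : ∃ e ∈ (pos n M A C).edges,
        lc (pos n M A C) ≤ mval (pos n M A C) e + g M.card := by
      have hlcp := lc_pos_eq hOK hn
      by_cases hA : A.Nonempty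
      · obtain ⟨x, hx⟩ := hA
        have he : ((0 : ℕ), x) ∈ (pos n M A C).edges :=
          mem_EOf.mpr (Or.inr (Or.inr (Or.inl ⟨x, hx, rfl⟩)))
        refine ⟨(0, x), he, ?_⟩
        have hxM : x ∉ M := Finset.disjoint_right.mp hOK.dMA hx
        have hrm := remove_A (n := n) (M := M) (C := C) hx hxM
        have hOK' := OK_erase_A hOK x
        have hAc : 1 ≤ A.card := Finset.card_pos.mpr ⟨x, hx⟩
        have hec : (A.erase x).card = A.card - 1 := Finset.card_erase_of_mem hx
        have IH := ih (2 * M.card + (A.erase x).card + C.card)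
          (by rw [hec]; omega) n M (A.erase x) C rfl hOK' hn
        have hsum := score_add (pos n M (A.erase x) C)
        have hlcc := lc_pos_eq hOK' hn
        have hrem := lc_remove (pos n M A C) he
        rw [hrm] at hrem
        rw [hec] at hlcc
        unfold mval
        rw [hrm]
        by_cases hcaps : (pos n M A C).caps (0, x) = 0
        · rw [if_pos hcaps]
          split_ifs at hlcp hlcc <;> first | omega | (exfalso; assumption)
        · rw [if_neg hcaps]
          split_ifs at hlcp hlcc <;> first | omega | (exfalso; assumption)
      · by_cases hC : C.Nonempty
        · obtain ⟨x, hx⟩ := hC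
          have he : ((1 : ℕ), x) ∈ (pos n M A C).edges :=
            mem_EOf.mpr (Or.inr (Or.inr (Or.inr ⟨x, hx, rfl⟩)))
          refine ⟨(1, x), he, ?_⟩
          have hxM : x ∉ M := Finset.disjoint_right.mp hOK.dMC hx
          have hrm := remove_C (n := n) (M := M) (A := A) hx hxM
          have hOK' := OK_erase_C hOK x
          have hCc : 1 ≤ C.card := Finset.card_pos.mpr ⟨x, hx⟩
          have hec : (C.erase x).card = C.card - 1 := Finset.card_erase_of_mem hx
          have IH := ih (2 * M.card + A.card + (C.erase x).card)
            (by rw [hec]; omega) n M A (C.erase x) rfl hOK' hn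
          have hsum := score_add (pos n M A (C.erase x))
          have hlcc := lc_pos_eq hOK' hn
          have hrem := lc_remove (pos n M A C) he
          rw [hrm] at hrem
          rw [hec] at hlcc
          unfold mval
          rw [hrm]
          by_cases hcaps : (pos n M A C).caps (1, x) = 0
          · rw [if_pos hcaps]
            split_ifs at hlcp hlcc <;> first | omega | (exfalso; assumption)
          · rw [if_neg hcaps]
            split_ifs at hlcp hlcc <;> first | omega | (exfalso; assumption)
        · have hM : M.Nonempty := by
            rcases Finset.eq_empty_or_nonempty M with rfl | hM
            · exfalso
              apply hz
              refine ⟨rfl, ?_, ?_⟩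
              · exact Finset.not_nonempty_iff_eq_empty.mp hA
              · exact Finset.not_nonempty_iff_eq_empty.mp hC
            · exact hM
          obtain ⟨x, hx⟩ := hM
          have hAe : A = ∅ := Finset.not_nonempty_iff_eq_empty.mp hA
          have hCe : C = ∅ := Finset.not_nonempty_iff_eq_empty.mp hC
          subst hAe; subst hCe
          have he : ((0 : ℕ), x) ∈ (pos n M ∅ ∅).edges :=
            mem_EOf.mpr (Or.inl ⟨x, hx, rfl⟩)
          refine ⟨(0, x), he, ?_⟩
          have hxA : x ∉ (∅ : Finset ℕ) := Finset.notMem_empty x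
          have hrm := remove_M0 (n := n) hx hxA hxA
          rw [Finset.insert_empty] at hrm
          have hOK' := OK_M0 hOK hx
          rw [Finset.insert_empty] at hOK'
          have hMc : 1 ≤ M.card := Finset.card_pos.mpr ⟨x, hx⟩
          have hec : (M.erase x).card = M.card - 1 := Finset.card_erase_of_mem hx
          have hic : ({x} : Finset ℕ).card = 1 := Finset.card_singleton x
          have IH := ih (2 * (M.erase x).card + (∅ : Finset ℕ).card + ({x} : Finset ℕ).card)
            (by rw [hec, hic]; omega) n (M.erase x) ∅ {x} rfl hOK' hn
          have hsum := score_add (pos n (M.erase x) ∅ {x})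
          have hlcc := lc_pos_eq hOK' hn
          have hrem := lc_remove (pos n M ∅ ∅) he
          rw [hrm] at hrem
          rw [hec] at IH
          rw [hec, hic] at hlcc
          have hg := g_rel M.card hMc
          have hem : (∅ : Finset ℕ).card = 0 := rfl
          unfold mval
          rw [hrm]
          by_cases hcaps : (pos n M ∅ ∅).caps (0, x) = 0
          · rw [if_pos hcaps]
            split_ifs at hlcp hlcc <;> first | omega | (exfalso; assumption)
          · rw [if_neg hcaps]
            split_ifs at hlcp hlcc <;> first | omega | (exfalso; assumption)
    obtain ⟨⟨e0, he0, hsc⟩, hub⟩ := score_spec _ hne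
    obtain ⟨e1, he1, hex1⟩ := hex
    have h1 := hub2 e0 he0
    have h2 := hub e1 he1
    have hs1 : (pos n M A C).score.1 = mval (pos n M A C) e0 := by
      rw [hsc]
      unfold mval
      by_cases hc : (pos n M A C).caps e0 = 0 <;> simp [hc]
    unfold mval at h1 h2 hex1 hs1
    omega


lemma k2b_edges : ∀ b : ℕ,
    ((((List.range b).flatMap fun j => [((0 : ℕ), j + 2), (1, j + 2)]) : List (ℕ × ℕ)) :
        Multiset (ℕ × ℕ)) = EOf (Finset.Ico 2 (b + 2)) ∅ ∅ := by
  intro b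
  induction b with
  | zero => simp [EOf]
  | succ b ihb =>
    rw [List.range_succ, List.flatMap_append, ← Multiset.coe_add, ihb]
    have h2 : Finset.Ico 2 (b + 1 + 2) = insert (b + 2) (Finset.Ico 2 (b + 2)) := by
      exact Nat.Ico_succ_right_eq_insert_Ico (by omega)
    rw [h2]
    unfold EOf
    rw [Finset.insert_val_of_notMem (by simp), Multiset.map_cons, Multiset.map_cons]
    have h3 : ((([b].flatMap fun j => [((0 : ℕ), j + 2), (1, j + 2)]) : List (ℕ × ℕ)) :
        Multiset (ℕ × ℕ)) = (0, b + 2) ::ₘ (1, b + 2) ::ₘ 0 := rfl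
    rw [h3]
    simp only [← Multiset.singleton_add]
    abel

lemma k2b_eq (b : ℕ) : k2bPos b = pos (b + 2) (Finset.Ico 2 (b + 2)) ∅ ∅ := by
  unfold k2bPos pos
  congr 1
  exact k2b_edges b


end SCAux

/-- On `K(2, b)` with `b ≥ 2`, Player 1 wins when `b` is odd and Player 2 wins
when `b` is even. -/
theorem stmt15 (b : ℕ) (hb : 2 ≤ b) :
    (Odd b → ((k2bPos b).score).2 < ((k2bPos b).score).1) ∧
    (Even b → ((k2bPos b).score).1 < ((k2bPos b).score).2) := by
  have hOK : SCAux.OK (b + 2) (Finset.Ico 2 (b + 2)) ∅ ∅ := by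
    refine ⟨?_, ?_, ?_, ?_, ?_, ?_⟩
    · intro x hx
      rw [Finset.mem_Ico] at hx
      omega
    · intro x hx
      exact absurd hx (Finset.notMem_empty x)
    · intro x hx
      exact absurd hx (Finset.notMem_empty x)
    · exact Finset.disjoint_empty_right _
    · exact Finset.disjoint_empty_right _
    · exact Finset.disjoint_empty_right _
  have hmain := SCAux.main_lemma
    (2 * (Finset.Ico 2 (b + 2)).card + (∅ : Finset ℕ).card + (∅ : Finset ℕ).card)
    (b + 2) (Finset.Ico 2 (b + 2)) ∅ ∅ rfl hOK (by omega)
  have hsum := SCAux.score_add (SCAux.pos (b + 2) (Finset.Ico 2 (b + 2)) ∅ ∅)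
  have hlc := SCAux.lc_pos_eq hOK (by omega)
  have hcard : (Finset.Ico 2 (b + 2)).card = b := by rw [Nat.card_Ico]; omega
  rw [hcard] at hmain hlc
  have hem : (∅ : Finset ℕ).card = 0 := rfl
  rw [SCAux.k2b_eq b]
  constructor
  · rintro ⟨k, hk⟩
    have hgb : SCAux.g b = (b - 1) / 2 := by unfold SCAux.g; split_ifs <;> omega
    split_ifs at hlc <;> omega
  · rintro ⟨k, hk⟩
    have hgb : SCAux.g b = b / 2 + 3 := by unfold SCAux.g; split_ifs <;> omega
    split_ifs at hlc <;> omega
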